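/- Let X, Θ, Y be separable real Hilbert spaces, U = X × Θ with norm ‖(x,θ)‖_U² = ‖x‖_X² + ‖θ‖_Θ², and F : U → Y Lipschitz with constant L. Let H be the class of all maps E : U → Y that are Lipschitz with constant at most R and satisfy ‖E(0)‖_Y ≤ B. Let ν, ν' be Borel probability measures on U with finite second moments. Then the infima of the risks over the hypothesis class satisfy |inf_{E∈H} R_{ν'}(E) − inf_{E∈H} R_ν(E)| ≤ c(ν,ν') · W₂(ν,ν'), where R_ν(E) = ∫ ‖F(u) − E(u)‖_Y² dν(u), W₂ is the 2-Wasserstein distance on U, and c(ν,ν') = C₁² √(2(∫‖u‖_U² dν + ∫‖u‖_U² dν')) + 2C₁C₂ with C₁ = L + R and C₂ = ‖F(0)‖_Y + B. -/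

import Mathlib

open MeasureTheory
open scoped ENNReal NNReal

noncomputable section

/-- The Hilbert norm on the product `U = X × Θ`: `‖(x, θ)‖_U = √(‖x‖² + ‖θ‖²)`. -/
def nU {X Θ : Type*} [NormedAddCommGroup X] [NormedAddCommGroup Θ] (u : X × Θ) : ℝ :=
  Real.sqrt (‖u.1‖ ^ 2 + ‖u.2‖ ^ 2)

/-- The 2-Wasserstein distance associated with a cost function `d`: the infimum over all
couplings `γ` of `μ` and `μ'` (i.e. probability measures on the product whose marginals are
`μ` and `μ'`) of `(∫ d(u,v)² dγ)^{1/2}`. -/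
def W2 {α : Type*} [MeasurableSpace α] (d : α → α → ℝ) (μ μ' : Measure α) : ℝ :=
  sInf { r : ℝ | ∃ γ : Measure (α × α), IsProbabilityMeasure γ ∧
      γ.map Prod.fst = μ ∧ γ.map Prod.snd = μ' ∧
      r = Real.sqrt (∫ p, d p.1 p.2 ^ 2 ∂γ) }

/-- The squared-error risk `R_ν(E) = ∫ ‖F(u) - E(u)‖² dν(u)`. -/
def risk {X Θ Y : Type*} [NormedAddCommGroup X] [NormedAddCommGroup Θ] [NormedAddCommGroup Y]
    [MeasurableSpace X] [MeasurableSpace Θ] (F E : X × Θ → Y) (ν : Measure (X × Θ)) : ℝ :=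
  ∫ u, ‖F u - E u‖ ^ 2 ∂ν

/-- The hypothesis class `H`: all maps `E : U → Y` that are Lipschitz with constant at most
`R₀` (with respect to the Hilbert product norm on `U`) and satisfy `‖E 0‖ ≤ B`. -/
def Hclass {X Θ Y : Type*} [NormedAddCommGroup X] [NormedAddCommGroup Θ] [NormedAddCommGroup Y]
    (R₀ B : ℝ) : Set (X × Θ → Y) :=
  { E | (∀ u v, ‖E u - E v‖ ≤ R₀ * nU (u - v)) ∧ ‖E 0‖ ≤ B }

/-- The constant `c(ν,ν') = C₁² √(2(∫‖u‖_U² dν + ∫‖u‖_U² dν')) + 2 C₁ C₂`, where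
`C₁ = L + R₀` and `C₂ = ‖F 0‖ + B`. -/
def cShift {X Θ Y : Type*} [NormedAddCommGroup X] [NormedAddCommGroup Θ] [NormedAddCommGroup Y]
    [MeasurableSpace X] [MeasurableSpace Θ] (L R₀ B : ℝ) (F : X × Θ → Y)
    (ν ν' : Measure (X × Θ)) : ℝ :=
  (L + R₀) ^ 2 * Real.sqrt (2 * ((∫ u, nU u ^ 2 ∂ν) + ∫ u, nU u ^ 2 ∂ν'))
    + 2 * (L + R₀) * (‖F 0‖ + B)

/-- The bound objective `J(ν) = inf_{E ∈ H} R_ν(E) + c(ν, ν_dep) W₂(ν, ν_dep)`, where the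
Wasserstein distance on `U = X × Θ` is taken with respect to the Hilbert product norm. -/
def Jobj {X Θ Y : Type*} [NormedAddCommGroup X] [NormedAddCommGroup Θ] [NormedAddCommGroup Y]
    [MeasurableSpace X] [MeasurableSpace Θ] (L R₀ B : ℝ) (F : X × Θ → Y)
    (νdep ν : Measure (X × Θ)) : ℝ :=
  sInf ((fun E => risk F E ν) '' Hclass R₀ B)
    + cShift L R₀ B F ν νdep * W2 (fun u v => nU (u - v)) ν νdep

variable {X Θ Y : Type*}
  [NormedAddCommGroup X] [InnerProductSpace ℝ X] [CompleteSpace X]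
  [SecondCountableTopology X] [MeasurableSpace X] [BorelSpace X]
  [NormedAddCommGroup Θ] [InnerProductSpace ℝ Θ] [CompleteSpace Θ]
  [SecondCountableTopology Θ] [MeasurableSpace Θ] [BorelSpace Θ]
  [NormedAddCommGroup Y] [InnerProductSpace ℝ Y] [CompleteSpace Y]
  [SecondCountableTopology Y]

section nUlemmas
variable {X Θ : Type*} [NormedAddCommGroup X] [NormedAddCommGroup Θ]

lemma nU_nonneg (u : X × Θ) : 0 ≤ nU u := Real.sqrt_nonneg _

lemma nU_eq_norm (u : X × Θ) : nU u = ‖(WithLp.equiv 2 (X × Θ)).symm u‖ := by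
  rw [WithLp.prod_norm_eq_of_L2]; rfl

lemma nU_add_le (u v : X × Θ) : nU (u + v) ≤ nU u + nU v := by
  simp only [nU_eq_norm]
  exact norm_add_le _ _

lemma nU_neg (u : X × Θ) : nU (-u) = nU u := by simp [nU]

lemma nU_sub_comm (u v : X × Θ) : nU (u - v) = nU (v - u) := by
  rw [← nU_neg (u - v), neg_sub]

lemma nU_sub_le (u v : X × Θ) : nU (u - v) ≤ nU u + nU v := by
  have := nU_add_le u (-v)
  simpa [sub_eq_add_neg, nU_neg] using this

lemma continuous_nU : Continuous (nU (X := X) (Θ := Θ)) := by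
  unfold nU
  exact ((continuous_fst.norm.pow 2).add (continuous_snd.norm.pow 2)).sqrt

lemma nU_le_sqrt_two_mul_norm (u : X × Θ) : nU u ≤ Real.sqrt 2 * ‖u‖ := by
  have h1 : ‖u.1‖ ≤ ‖u‖ := norm_fst_le u
  have h2 : ‖u.2‖ ≤ ‖u‖ := norm_snd_le u
  have : nU u ≤ Real.sqrt (2 * ‖u‖ ^ 2) := by
    apply Real.sqrt_le_sqrt
    nlinarith [norm_nonneg u, norm_nonneg u.1, norm_nonneg u.2]
  calc nU u ≤ Real.sqrt (2 * ‖u‖ ^ 2) := this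
  _ = Real.sqrt 2 * ‖u‖ := by
      rw [Real.sqrt_mul (by norm_num)]
      congr 1
      exact Real.sqrt_sq (norm_nonneg u)

lemma continuous_of_lip_nU {Z : Type*} [NormedAddCommGroup Z] {f : X × Θ → Z} {K : ℝ}
    (hK : 0 ≤ K) (h : ∀ u v, ‖f u - f v‖ ≤ K * nU (u - v)) : Continuous f := by
  have : LipschitzWith (Real.toNNReal (K * Real.sqrt 2)) f := by
    apply LipschitzWith.of_dist_le_mul
    intro u v
    rw [dist_eq_norm, dist_eq_norm]
    calc ‖f u - f v‖ ≤ K * nU (u - v) := h u v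
    _ ≤ K * (Real.sqrt 2 * ‖u - v‖) :=
        mul_le_mul_of_nonneg_left (nU_le_sqrt_two_mul_norm _) hK
    _ = Real.toNNReal (K * Real.sqrt 2) * ‖u - v‖ := by
        rw [Real.coe_toNNReal _ (mul_nonneg hK (Real.sqrt_nonneg 2))]
        ring
  exact this.continuous

end nUlemmas

lemma my_cauchy_schwarz {α : Type*} [MeasurableSpace α] {μ : Measure α} {f g : α → ℝ}
    (hf : Integrable (fun x => f x ^ 2) μ) (hg : Integrable (fun x => g x ^ 2) μ)
    (hfg : Integrable (fun x => f x * g x) μ) :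
    ∫ x, f x * g x ∂μ ≤ Real.sqrt (∫ x, f x ^ 2 ∂μ) * Real.sqrt (∫ x, g x ^ 2 ∂μ) := by
  set A := ∫ x, f x ^ 2 ∂μ with hA
  set B := ∫ x, g x ^ 2 ∂μ with hB
  set I := ∫ x, f x * g x ∂μ with hI
  have hA0 : 0 ≤ A := integral_nonneg fun x => sq_nonneg _
  have hB0 : 0 ≤ B := integral_nonneg fun x => sq_nonneg _
  have key : ∀ t : ℝ, 0 ≤ A * (t * t) + (-2 * I) * t + B := by
    intro t
    have h0 : (0:ℝ) ≤ ∫ x, (t * f x - g x) ^ 2 ∂μ := integral_nonneg fun x => sq_nonneg _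
    have hexp : ∫ x, (t * f x - g x) ^ 2 ∂μ
        = ∫ x, ((t ^ 2) * (f x ^ 2) + (-2 * t) * (f x * g x) + g x ^ 2) ∂μ := by
      congr 1; funext x; ring
    have i1 : Integrable (fun x => (t ^ 2) * (f x ^ 2) + (-2 * t) * (f x * g x)) μ :=
      (hf.const_mul _).add (hfg.const_mul _)
    have i2 : Integrable (fun x => (t ^ 2) * (f x ^ 2)) μ := hf.const_mul _
    have i3 : Integrable (fun x => (-2 * t) * (f x * g x)) μ := hfg.const_mul _
    rw [hexp, integral_add i1 hg, integral_add i2 i3,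
      integral_const_mul, integral_const_mul] at h0
    nlinarith [h0]
  have hdisc := discrim_le_zero key
  rw [discrim] at hdisc
  have hI2 : I ^ 2 ≤ A * B := by nlinarith [hdisc]
  calc I ≤ |I| := le_abs_self I
  _ = Real.sqrt (I ^ 2) := (Real.sqrt_sq_eq_abs I).symm
  _ ≤ Real.sqrt (A * B) := Real.sqrt_le_sqrt hI2
  _ = Real.sqrt A * Real.sqrt B := Real.sqrt_mul hA0 B

lemma risk_diff_le {F E : X × Θ → Y} {L R B : ℝ}
    (hL : 0 ≤ L) (hR : 0 ≤ R) (hB : 0 ≤ B)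
    (hF : ∀ u v : X × Θ, ‖F u - F v‖ ≤ L * nU (u - v))
    (hE : E ∈ (Hclass R B : Set (X × Θ → Y)))
    (ν ν' : Measure (X × Θ)) [IsProbabilityMeasure ν] [IsProbabilityMeasure ν']
    (hν : Integrable (fun u => nU u ^ 2) ν) (hν' : Integrable (fun u => nU u ^ 2) ν')
    (γ : Measure ((X × Θ) × (X × Θ))) [IsProbabilityMeasure γ]
    (h1 : γ.map Prod.fst = ν) (h2 : γ.map Prod.snd = ν') :
    |risk F E ν' - risk F E ν|
      ≤ cShift L R B F ν ν' * Real.sqrt (∫ p, nU (p.1 - p.2) ^ 2 ∂γ) := by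
  obtain ⟨hElip, hE0⟩ := hE
  set C₁ : ℝ := L + R with hC1def
  set C₂ : ℝ := ‖F 0‖ + B with hC2def
  have hC₁ : 0 ≤ C₁ := add_nonneg hL hR
  have hC₂ : 0 ≤ C₂ := add_nonneg (norm_nonneg _) hB
  have hFc : Continuous F := continuous_of_lip_nU hL hF
  have hEc : Continuous E := continuous_of_lip_nU hR hElip
  set g : X × Θ → ℝ := fun u => ‖F u - E u‖ ^ 2 with hgdef
  have hgc : Continuous g := (hFc.sub hEc).norm.pow 2
  -- pointwise norm bound
  have hnb : ∀ u : X × Θ, ‖F u - E u‖ ≤ C₁ * nU u + C₂ := by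
    intro u
    have e : F u - E u = (F u - F 0) - (E u - E 0) + (F 0 - E 0) := by abel
    calc ‖F u - E u‖ ≤ ‖(F u - F 0) - (E u - E 0)‖ + ‖F 0 - E 0‖ := by
          rw [e]; exact norm_add_le _ _
    _ ≤ (‖F u - F 0‖ + ‖E u - E 0‖) + (‖F 0‖ + ‖E 0‖) :=
        add_le_add (norm_sub_le _ _) (norm_sub_le _ _)
    _ ≤ (L * nU (u - 0) + R * nU (u - 0)) + (‖F 0‖ + B) :=
        add_le_add (add_le_add (hF u 0) (hElip u 0)) (add_le_add_right hE0 _)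
    _ = C₁ * nU u + C₂ := by rw [sub_zero]; ring
  have hgbound : ∀ u : X × Θ, g u ≤ (2 * C₁ ^ 2) * nU u ^ 2 + 2 * C₂ ^ 2 := by
    intro u
    have h := hnb u
    have hg : g u = ‖F u - E u‖ ^ 2 := rfl
    rw [hg]
    nlinarith [norm_nonneg (F u - E u), nU_nonneg u, sq_nonneg (C₁ * nU u - C₂)]
  -- integrability of g w.r.t. ν, ν'
  have hgint : ∀ (μ : Measure (X × Θ)) [IsProbabilityMeasure μ],
      Integrable (fun u => nU u ^ 2) μ → Integrable g μ := by
    intro μ _ hμ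
    have hmaj : Integrable (fun u => (2 * C₁ ^ 2) * nU u ^ 2 + 2 * C₂ ^ 2) μ :=
      (hμ.const_mul (2 * C₁ ^ 2)).add (integrable_const (2 * C₂ ^ 2))
    refine Integrable.mono' hmaj hgc.aestronglyMeasurable (ae_of_all _ fun u => ?_)
    rw [Real.norm_eq_abs, abs_of_nonneg (sq_nonneg _)]
    exact hgbound u
  have hgν : Integrable g ν := hgint ν hν
  have hgν' : Integrable g ν' := hgint ν' hν'
  -- integrability on γ
  have hgfst : Integrable (fun p : (X × Θ) × (X × Θ) => g p.1) γ := by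
    rw [← h1] at hgν
    exact (integrable_map_measure hgc.aestronglyMeasurable measurable_fst.aemeasurable).mp hgν
  have hgsnd : Integrable (fun p : (X × Θ) × (X × Θ) => g p.2) γ := by
    rw [← h2] at hgν'
    exact (integrable_map_measure hgc.aestronglyMeasurable measurable_snd.aemeasurable).mp hgν'
  have hnU2c : Continuous (fun u : X × Θ => nU u ^ 2) := continuous_nU.pow 2
  have hn1 : Integrable (fun p : (X × Θ) × (X × Θ) => nU p.1 ^ 2) γ := by
    rw [← h1] at hν
    exact (integrable_map_measure hnU2c.aestronglyMeasurable measurable_fst.aemeasurable).mp hν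
  have hn2 : Integrable (fun p : (X × Θ) × (X × Θ) => nU p.2 ^ 2) γ := by
    rw [← h2] at hν'
    exact (integrable_map_measure hnU2c.aestronglyMeasurable measurable_snd.aemeasurable).mp hν'
  set d : (X × Θ) × (X × Θ) → ℝ := fun p => nU (p.1 - p.2) with hddef
  set s : (X × Θ) × (X × Θ) → ℝ := fun p => nU p.1 + nU p.2 with hsdef
  have hdc : Continuous d := continuous_nU.comp (continuous_fst.sub continuous_snd)
  have hsc : Continuous s := (continuous_nU.comp continuous_fst).add
    (continuous_nU.comp continuous_snd)
  have hd0 : ∀ p, 0 ≤ d p := fun p => nU_nonneg _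
  have hs0 : ∀ p, 0 ≤ s p := fun p => add_nonneg (nU_nonneg _) (nU_nonneg _)
  have hds : ∀ p, d p ≤ s p := fun p => nU_sub_le p.1 p.2
  have hsval : ∀ p : (X × Θ) × (X × Θ), s p = nU p.1 + nU p.2 := fun _ => rfl
  have hdval : ∀ p : (X × Θ) × (X × Θ), d p = nU (p.1 - p.2) := fun _ => rfl
  clear_value s d
  have hmaj2 : Integrable (fun p : (X × Θ) × (X × Θ) => 2 * nU p.1 ^ 2 + 2 * nU p.2 ^ 2) γ :=
    (hn1.const_mul 2).add (hn2.const_mul 2)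
  have hs2int : Integrable (fun p => s p ^ 2) γ := by
    refine Integrable.mono' hmaj2
      (hsc.pow 2).aestronglyMeasurable (ae_of_all _ fun p => ?_)
    rw [Real.norm_eq_abs, abs_of_nonneg (sq_nonneg _)]
    have := nU_nonneg p.1; have := nU_nonneg p.2
    rw [hsval p]; nlinarith [sq_nonneg (nU p.1 - nU p.2)]
  have hd2int : Integrable (fun p => d p ^ 2) γ := by
    refine Integrable.mono' hmaj2
      (hdc.pow 2).aestronglyMeasurable (ae_of_all _ fun p => ?_)
    rw [Real.norm_eq_abs, abs_of_nonneg (sq_nonneg _)]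
    have h := hds p
    rw [hsval p] at h
    have := hd0 p; have := nU_nonneg p.1; have := nU_nonneg p.2
    nlinarith [sq_nonneg (nU p.1 - nU p.2)]
  have hdint : Integrable d γ := by
    have hmaj3 : Integrable (fun p : (X × Θ) × (X × Θ) => d p ^ 2 + 1) γ :=
      hd2int.add (integrable_const 1)
    refine Integrable.mono' hmaj3
      hdc.aestronglyMeasurable (ae_of_all _ fun p => ?_)
    rw [Real.norm_eq_abs, abs_of_nonneg (hd0 p)]
    nlinarith [hd0 p, sq_nonneg (d p - 1)]
  have hsdint : Integrable (fun p => s p * d p) γ := by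
    have hmaj4 : Integrable (fun p : (X × Θ) × (X × Θ) => (1/2) * s p ^ 2 + (1/2) * d p ^ 2) γ :=
      (hs2int.const_mul (1/2)).add (hd2int.const_mul (1/2))
    refine Integrable.mono' hmaj4
      (hsc.mul hdc).aestronglyMeasurable (ae_of_all _ fun p => ?_)
    show ‖s p * d p‖ ≤ 1 / 2 * s p ^ 2 + 1 / 2 * d p ^ 2
    rw [Real.norm_eq_abs, abs_of_nonneg (mul_nonneg (hs0 p) (hd0 p))]
    have h2ab := two_mul_le_add_sq (s p) (d p)
    linarith
  -- rewrite risks as integrals over γ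
  have hrν' : risk F E ν' = ∫ p, g p.2 ∂γ := by
    have hm : AEStronglyMeasurable g (γ.map Prod.snd) := by
      rw [h2]; exact hgc.aestronglyMeasurable
    rw [risk, ← h2, integral_map measurable_snd.aemeasurable hm]
  have hrν : risk F E ν = ∫ p, g p.1 ∂γ := by
    have hm : AEStronglyMeasurable g (γ.map Prod.fst) := by
      rw [h1]; exact hgc.aestronglyMeasurable
    rw [risk, ← h1, integral_map measurable_fst.aemeasurable hm]
  have key0 : risk F E ν' - risk F E ν = ∫ p, (g p.2 - g p.1) ∂γ := by
    rw [hrν', hrν, ← integral_sub hgsnd hgfst]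
  -- pointwise difference bound
  have hpt : ∀ p : (X × Θ) × (X × Θ),
      |g p.2 - g p.1| ≤ C₁ ^ 2 * (s p * d p) + (2 * C₁ * C₂) * d p := by
    intro p
    set a := F p.2 - E p.2 with hadef
    set b := F p.1 - E p.1 with hbdef
    have hna : ‖a‖ ≤ C₁ * nU p.2 + C₂ := hnb p.2
    have hnb' : ‖b‖ ≤ C₁ * nU p.1 + C₂ := hnb p.1
    have hab : ‖a - b‖ ≤ C₁ * d p := by
      have e : a - b = (F p.2 - F p.1) - (E p.2 - E p.1) := by rw [hadef, hbdef]; abel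
      calc ‖a - b‖ ≤ ‖F p.2 - F p.1‖ + ‖E p.2 - E p.1‖ := by rw [e]; exact norm_sub_le _ _
      _ ≤ L * nU (p.2 - p.1) + R * nU (p.2 - p.1) := add_le_add (hF _ _) (hElip _ _)
      _ = C₁ * d p := by rw [hdval p, nU_sub_comm]; ring
    have habs : |g p.2 - g p.1| = |‖a‖ - ‖b‖| * (‖a‖ + ‖b‖) := by
      have e : g p.2 - g p.1 = (‖a‖ - ‖b‖) * (‖a‖ + ‖b‖) := by
        simp only [hgdef, ← hadef, ← hbdef]; ring
      rw [e, abs_mul, abs_of_nonneg (add_nonneg (norm_nonneg a) (norm_nonneg b))]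
    calc |g p.2 - g p.1| = |‖a‖ - ‖b‖| * (‖a‖ + ‖b‖) := habs
    _ ≤ ‖a - b‖ * (‖a‖ + ‖b‖) :=
        mul_le_mul_of_nonneg_right (abs_norm_sub_norm_le a b)
          (add_nonneg (norm_nonneg a) (norm_nonneg b))
    _ ≤ (C₁ * d p) * ((C₁ * nU p.2 + C₂) + (C₁ * nU p.1 + C₂)) :=
        mul_le_mul hab (add_le_add hna hnb')
          (add_nonneg (norm_nonneg a) (norm_nonneg b)) (mul_nonneg hC₁ (hd0 p))
    _ = C₁ ^ 2 * (s p * d p) + (2 * C₁ * C₂) * d p := by rw [hsval p]; ring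
  -- integrate
  have habs2 : |risk F E ν' - risk F E ν|
      ≤ ∫ p, (C₁ ^ 2 * (s p * d p) + (2 * C₁ * C₂) * d p) ∂γ := by
    rw [key0]
    calc |∫ p, (g p.2 - g p.1) ∂γ| ≤ ∫ p, |g p.2 - g p.1| ∂γ := by
          simpa [Real.norm_eq_abs] using norm_integral_le_integral_norm (fun p => g p.2 - g p.1) (μ := γ)
    _ ≤ ∫ p, (C₁ ^ 2 * (s p * d p) + (2 * C₁ * C₂) * d p) ∂γ := by
        refine integral_mono (hgsnd.sub hgfst).abs
          ((hsdint.const_mul _).add (hdint.const_mul _)) hpt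
  have hsplit : ∫ p, (C₁ ^ 2 * (s p * d p) + (2 * C₁ * C₂) * d p) ∂γ
      = C₁ ^ 2 * ∫ p, s p * d p ∂γ + (2 * C₁ * C₂) * ∫ p, d p ∂γ := by
    rw [integral_add (hsdint.const_mul _) (hdint.const_mul _), integral_const_mul,
      integral_const_mul]
  set W := Real.sqrt (∫ p, d p ^ 2 ∂γ) with hWdef
  have hW0 : 0 ≤ W := Real.sqrt_nonneg _
  have hCS1 : ∫ p, s p * d p ∂γ ≤ Real.sqrt (∫ p, s p ^ 2 ∂γ) * W :=
    my_cauchy_schwarz hs2int hd2int hsdint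
  have hCS2 : ∫ p, d p ∂γ ≤ W := by
    have h := my_cauchy_schwarz (f := d) (g := fun _ => (1:ℝ)) (μ := γ) hd2int
      (by simpa using (integrable_const (1:ℝ))) (by simpa using hdint)
    simpa [measure_univ] using h
  
  have hmarg1 : ∫ p, nU p.1 ^ 2 ∂γ = ∫ u, nU u ^ 2 ∂ν := by
    rw [← h1, integral_map measurable_fst.aemeasurable]
    rw [h1]; exact hnU2c.aestronglyMeasurable
  have hmarg2 : ∫ p, nU p.2 ^ 2 ∂γ = ∫ u, nU u ^ 2 ∂ν' := by
    rw [← h2, integral_map measurable_snd.aemeasurable]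
    rw [h2]; exact hnU2c.aestronglyMeasurable
  have hs2le : ∫ p, s p ^ 2 ∂γ
      ≤ 2 * ((∫ u, nU u ^ 2 ∂ν) + ∫ u, nU u ^ 2 ∂ν') := by
    calc ∫ p, s p ^ 2 ∂γ ≤ ∫ p, (2 * nU p.1 ^ 2 + 2 * nU p.2 ^ 2) ∂γ := by
          refine integral_mono hs2int hmaj2 fun p => ?_
          rw [hsval p]; nlinarith [sq_nonneg (nU p.1 - nU p.2)]
    _ = 2 * ((∫ u, nU u ^ 2 ∂ν) + ∫ u, nU u ^ 2 ∂ν') := by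
        have i2 : Integrable (fun p : (X × Θ) × (X × Θ) => 2 * nU p.1 ^ 2) γ := hn1.const_mul 2
        have i3 : Integrable (fun p : (X × Θ) × (X × Θ) => 2 * nU p.2 ^ 2) γ := hn2.const_mul 2
        rw [integral_add i2 i3, integral_const_mul, integral_const_mul, hmarg1, hmarg2]; ring
  have hsq : Real.sqrt (∫ p, s p ^ 2 ∂γ)
      ≤ Real.sqrt (2 * ((∫ u, nU u ^ 2 ∂ν) + ∫ u, nU u ^ 2 ∂ν')) := Real.sqrt_le_sqrt hs2le
  have hint_sd_nonneg : 0 ≤ ∫ p, s p * d p ∂γ :=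
    integral_nonneg fun p => mul_nonneg (hs0 p) (hd0 p)
  calc |risk F E ν' - risk F E ν|
      ≤ C₁ ^ 2 * ∫ p, s p * d p ∂γ + (2 * C₁ * C₂) * ∫ p, d p ∂γ := by
        rw [← hsplit]; exact habs2
  _ ≤ C₁ ^ 2 * (Real.sqrt (2 * ((∫ u, nU u ^ 2 ∂ν) + ∫ u, nU u ^ 2 ∂ν')) * W)
      + (2 * C₁ * C₂) * W := by
      refine add_le_add (mul_le_mul_of_nonneg_left ?_ (sq_nonneg C₁))
        (mul_le_mul_of_nonneg_left hCS2 (by positivity))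
      exact hCS1.trans (mul_le_mul_of_nonneg_right hsq hW0)
  _ = cShift L R B F ν ν' * W := by
      rw [cShift, ← hC1def, ← hC2def]; ring
  _ = cShift L R B F ν ν' * Real.sqrt (∫ p, nU (p.1 - p.2) ^ 2 ∂γ) := by
      rw [hWdef, hddef]

lemma abs_le_mul_sInf {c Δ : ℝ} {S : Set ℝ} (hc : 0 ≤ c) (hne : S.Nonempty)
    (h : ∀ r ∈ S, |Δ| ≤ c * r) : |Δ| ≤ c * sInf S := by
  rcases hc.eq_or_lt with h0 | hpos
  · obtain ⟨r₀, hr₀⟩ := hne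
    have hh := h r₀ hr₀
    rw [← h0] at hh ⊢
    simpa using hh
  · have hlb : |Δ| / c ≤ sInf S := by
      refine le_csInf hne fun r hr => ?_
      rw [div_le_iff₀ hpos]
      have := h r hr
      linarith
    calc |Δ| = |Δ| / c * c := (div_mul_cancel₀ _ hpos.ne').symm
    _ ≤ sInf S * c := mul_le_mul_of_nonneg_right hlb hpos.le
    _ = c * sInf S := mul_comm _ _

/-- **stability of the optimal risk over the hypothesis class.**
`|inf_{E∈H} R_{ν'}(E) − inf_{E∈H} R_ν(E)| ≤ c(ν,ν') · W₂(ν,ν')`. -/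
theorem inf_risk_shift (F : X × Θ → Y) (L R B : ℝ)
    (hL : 0 ≤ L) (hR : 0 ≤ R) (hB : 0 ≤ B)
    (hF : ∀ u v : X × Θ, ‖F u - F v‖ ≤ L * nU (u - v))
    (ν ν' : Measure (X × Θ)) [IsProbabilityMeasure ν] [IsProbabilityMeasure ν']
    (hν : Integrable (fun u => nU u ^ 2) ν) (hν' : Integrable (fun u => nU u ^ 2) ν') :
    |sInf ((fun E => risk F E ν') '' (Hclass R B : Set (X × Θ → Y)))
        - sInf ((fun E => risk F E ν) '' (Hclass R B : Set (X × Θ → Y)))|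
      ≤ cShift L R B F ν ν' * W2 (fun u v => nU (u - v)) ν ν' := by
  have hc : 0 ≤ cShift L R B F ν ν' := by
    rw [cShift]
    have h2LR : (0:ℝ) ≤ 2 * (L + R) := by linarith
    exact add_nonneg (mul_nonneg (sq_nonneg _) (Real.sqrt_nonneg _))
      (mul_nonneg h2LR (add_nonneg (norm_nonneg _) hB))
  have h0mem : (0 : X × Θ → Y) ∈ (Hclass R B : Set (X × Θ → Y)) := by
    constructor
    · intro u v
      simpa using mul_nonneg hR (nU_nonneg (u - v))
    · simpa using hB
  have hneA : ((fun E => risk F E ν) '' (Hclass R B : Set (X × Θ → Y))).Nonempty :=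
    ⟨_, Set.mem_image_of_mem _ h0mem⟩
  have hneA' : ((fun E => risk F E ν') '' (Hclass R B : Set (X × Θ → Y))).Nonempty :=
    ⟨_, Set.mem_image_of_mem _ h0mem⟩
  have hbddA : BddBelow ((fun E => risk F E ν) '' (Hclass R B : Set (X × Θ → Y))) := by
    refine ⟨0, ?_⟩
    rintro b ⟨E, hE, rfl⟩
    exact integral_nonneg fun u => sq_nonneg _
  have hbddA' : BddBelow ((fun E => risk F E ν') '' (Hclass R B : Set (X × Θ → Y))) := by
    refine ⟨0, ?_⟩
    rintro b ⟨E, hE, rfl⟩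
    exact integral_nonneg fun u => sq_nonneg _
  have key : ∀ (γ : Measure ((X × Θ) × (X × Θ))), IsProbabilityMeasure γ →
      γ.map Prod.fst = ν → γ.map Prod.snd = ν' →
      |sInf ((fun E => risk F E ν') '' (Hclass R B : Set (X × Θ → Y)))
          - sInf ((fun E => risk F E ν) '' (Hclass R B : Set (X × Θ → Y)))|
        ≤ cShift L R B F ν ν' * Real.sqrt (∫ p, nU (p.1 - p.2) ^ 2 ∂γ) := by
    intro γ hγ hm1 hm2
    haveI := hγ
    have hbound : ∀ E ∈ (Hclass R B : Set (X × Θ → Y)),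
        |risk F E ν' - risk F E ν|
          ≤ cShift L R B F ν ν' * Real.sqrt (∫ p, nU (p.1 - p.2) ^ 2 ∂γ) :=
      fun E hE => risk_diff_le hL hR hB hF hE ν ν' hν hν' γ hm1 hm2
    have h1' : sInf ((fun E => risk F E ν') '' (Hclass R B : Set (X × Θ → Y)))
        ≤ sInf ((fun E => risk F E ν) '' (Hclass R B : Set (X × Θ → Y)))
          + cShift L R B F ν ν' * Real.sqrt (∫ p, nU (p.1 - p.2) ^ 2 ∂γ) := by
      rw [← sub_le_iff_le_add]
      refine le_csInf hneA ?_
      rintro b ⟨E, hE, rfl⟩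
      have h3 : sInf ((fun E => risk F E ν') '' (Hclass R B : Set (X × Θ → Y)))
          ≤ risk F E ν' := csInf_le hbddA' ⟨E, hE, rfl⟩
      have h4 := (abs_le.mp (hbound E hE)).2
      simp only at h3 h4 ⊢
      linarith
    have h2' : sInf ((fun E => risk F E ν) '' (Hclass R B : Set (X × Θ → Y)))
        ≤ sInf ((fun E => risk F E ν') '' (Hclass R B : Set (X × Θ → Y)))
          + cShift L R B F ν ν' * Real.sqrt (∫ p, nU (p.1 - p.2) ^ 2 ∂γ) := by
      rw [← sub_le_iff_le_add]
      refine le_csInf hneA' ?_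
      rintro b ⟨E, hE, rfl⟩
      have h3 : sInf ((fun E => risk F E ν) '' (Hclass R B : Set (X × Θ → Y)))
          ≤ risk F E ν := csInf_le hbddA ⟨E, hE, rfl⟩
      have h4 := (abs_le.mp (hbound E hE)).1
      simp only at h3 h4 ⊢
      linarith
    rw [abs_le]
    constructor <;> linarith
  rw [W2]
  refine abs_le_mul_sInf hc
    ⟨Real.sqrt (∫ p, nU (p.1 - p.2) ^ 2 ∂(ν.prod ν')),
      ν.prod ν', inferInstance, ?_, ?_, rfl⟩ ?_
  · rw [Measure.map_fst_prod]; simp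
  · rw [Measure.map_snd_prod]; simp
  · rintro r ⟨γ, hγ, hm1, hm2, rfl⟩
    exact key γ hγ hm1 hm2
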